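/- If a subshift X over a finite alphabet contains a non-periodic element, then X contains a non-trivial asymptotic pair, i.e., two distinct elements x, y ∈ X such that x(n) = y(n) for all sufficiently negative n. -/

import Mathlib

/-- If a subshift over a finite alphabet contains a non-periodic element,
then it contains a non-trivial (negatively) asymptotic pair. -/
theorem subshift_nonperiodic_has_asymptotic_pair
    {A : Type*} [Fintype A] [TopologicalSpace A] [DiscreteTopology A]
    (X : Set (ℤ → A)) (hclosed : IsClosed X)
    (hinv : ∀ x ∈ X, (fun j => x (j + 1)) ∈ X)
    (hinv' : ∀ x ∈ X, (fun j => x (j - 1)) ∈ X)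
    (hnp : ∃ x ∈ X, ¬ ∃ p : ℕ, 0 < p ∧ ∀ j : ℤ, x (j + (p : ℤ)) = x j) :
    ∃ x ∈ X, ∃ y ∈ X, x ≠ y ∧ ∃ N : ℤ, ∀ n : ℤ, n ≤ N → x n = y n := by
  obtain ⟨x, hx, hxnp⟩ := hnp
  by_contra hcon
  push_neg at hcon
  -- all shifts stay in X
  have hshift : ∀ k : ℤ, ∀ z ∈ X, (fun j => z (j + k)) ∈ X := by
    intro k
    induction k using Int.induction_on with
    | zero => intro z hz; simpa using hz
    | succ k ih =>
      intro z hz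
      have h := hinv _ (ih z hz)
      have he : (fun j => z (j + ((k : ℤ) + 1))) = (fun j => z (j + 1 + (k : ℤ))) := by
        funext j; congr 1; ring
      rw [he]; exact h
    | pred k ih =>
      intro z hz
      have h := hinv' _ (ih z hz)
      have he : (fun j => z (j + (-(k : ℤ) - 1))) = (fun j => z (j - 1 + -(k : ℤ))) := by
        funext j; congr 1; ring
      rw [he]; exact h
  -- compactness: uniform window determinism
  have key : ∃ m : ℕ, ∀ u ∈ X, ∀ v ∈ X,
      (∀ n : ℤ, -(m : ℤ) ≤ n → n ≤ 0 → u n = v n) → u 1 = v 1 := by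
    by_contra hm
    push_neg at hm
    set C : ℕ → Set ((ℤ → A) × (ℤ → A)) := fun m =>
      {p | p.1 ∈ X ∧ p.2 ∈ X ∧ (∀ n : ℤ, -(m : ℤ) ≤ n → n ≤ 0 → p.1 n = p.2 n) ∧
        p.1 1 ≠ p.2 1} with hC
    have hCcl : ∀ m, IsClosed (C m) := by
      intro m
      have h1 : IsClosed {p : (ℤ → A) × (ℤ → A) | p.1 ∈ X} :=
        hclosed.preimage continuous_fst
      have h2 : IsClosed {p : (ℤ → A) × (ℤ → A) | p.2 ∈ X} :=
        hclosed.preimage continuous_snd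
      have h3 : ∀ n : ℤ, IsClosed {p : (ℤ → A) × (ℤ → A) | p.1 n = p.2 n} := by
        intro n
        have hcont : Continuous (fun p : (ℤ → A) × (ℤ → A) => (p.1 n, p.2 n)) :=
          ((continuous_apply n).comp continuous_fst).prodMk
            ((continuous_apply n).comp continuous_snd)
        have he : {p : (ℤ → A) × (ℤ → A) | p.1 n = p.2 n} =
            (fun p : (ℤ → A) × (ℤ → A) => (p.1 n, p.2 n)) ⁻¹' (Set.diagonal A) := rfl
        rw [he]
        exact (isClosed_diagonal : IsClosed (Set.diagonal A)).preimage hcont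
      have h4 : IsClosed {p : (ℤ → A) × (ℤ → A) | p.1 1 ≠ p.2 1} := by
        have hcont : Continuous (fun p : (ℤ → A) × (ℤ → A) => (p.1 1, p.2 1)) :=
          ((continuous_apply (1 : ℤ)).comp continuous_fst).prodMk
            ((continuous_apply (1 : ℤ)).comp continuous_snd)
        have he : {p : (ℤ → A) × (ℤ → A) | p.1 1 ≠ p.2 1} =
            (fun p : (ℤ → A) × (ℤ → A) => (p.1 1, p.2 1)) ⁻¹' (Set.diagonal A)ᶜ := rfl
        rw [he]
        exact ((isOpen_discrete (Set.diagonal A)).isClosed_compl).preimage hcont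
      have he : C m = ({p : (ℤ → A) × (ℤ → A) | p.1 ∈ X} ∩
          ({p : (ℤ → A) × (ℤ → A) | p.2 ∈ X} ∩
          ((⋂ n : ℤ, ⋂ _ : -(m : ℤ) ≤ n, ⋂ _ : n ≤ 0,
              {p : (ℤ → A) × (ℤ → A) | p.1 n = p.2 n}) ∩
            {p : (ℤ → A) × (ℤ → A) | p.1 1 ≠ p.2 1}))) := by
        ext p
        simp only [hC, Set.mem_setOf_eq, Set.mem_inter_iff, Set.mem_iInter]
      rw [he]
      exact h1.inter (h2.inter ((isClosed_iInter fun n =>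
        isClosed_iInter fun _ => isClosed_iInter fun _ => h3 n).inter h4))
    have hCne : ∀ m, (C m).Nonempty := by
      intro m
      obtain ⟨u, hu, v, hv, hagr, hne⟩ := hm m
      exact ⟨(u, v), hu, hv, hagr, hne⟩
    have hCmono : ∀ m, C (m + 1) ⊆ C m := by
      intro m p hp
      obtain ⟨h1, h2, h3, h4⟩ := hp
      exact ⟨h1, h2, fun n hn h0 => h3 n (by push_cast; omega) h0, h4⟩
    obtain ⟨⟨u, v⟩, hp⟩ :=
      IsCompact.nonempty_iInter_of_sequence_nonempty_isCompact_isClosed C hCmono hCne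
        ((hCcl 0).isCompact) hCcl
    simp only [Set.mem_iInter] at hp
    have hu : u ∈ X := (hp 0).1
    have hv : v ∈ X := (hp 0).2.1
    have hne : u ≠ v := by
      intro h
      exact (hp 0).2.2.2 (by rw [h])
    have hagr : ∀ n : ℤ, n ≤ 0 → u n = v n := by
      intro n hn
      exact (hp (-n).toNat).2.2.1 n (by omega) hn
    obtain ⟨n, hn0, hneq⟩ := hcon u hu v hv hne 0
    exact hneq (hagr n hn0)
  obtain ⟨m, det⟩ := key
  -- shifted determinism
  have det' : ∀ u ∈ X, ∀ v ∈ X, ∀ k : ℤ,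
      (∀ n : ℤ, k - (m : ℤ) ≤ n → n ≤ k → u n = v n) → u (k + 1) = v (k + 1) := by
    intro u hu v hv k h
    have h1 := det (fun j => u (j + k)) (hshift k u hu) (fun j => v (j + k))
      (hshift k v hv) (fun n hn1 hn2 => h (n + k) (by omega) (by omega))
    have h2 : u (1 + k) = v (1 + k) := h1
    rw [show k + 1 = 1 + k from by ring]
    exact h2
  -- if two windows of x agree, x is forward-periodic from there
  have agree : ∀ a b : ℤ,
      (∀ i : Fin (m + 1), x (a - (m : ℤ) + (i.1 : ℤ)) = x (b - (m : ℤ) + (i.1 : ℤ))) →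
      ∀ n : ℤ, a - (m : ℤ) ≤ n → x n = x (n + (b - a)) := by
    intro a b hab
    have hyX : (fun j => x (j + (b - a))) ∈ X := hshift (b - a) x hx
    have base : ∀ n : ℤ, a - (m : ℤ) ≤ n → n ≤ a → x n = x (n + (b - a)) := by
      intro n h1 h2
      have hi := hab ⟨(n - a + (m : ℤ)).toNat, by omega⟩
      have e1 : a - (m : ℤ) + (((n - a + (m : ℤ)).toNat : ℤ)) = n := by omega
      have e2 : b - (m : ℤ) + (((n - a + (m : ℤ)).toNat : ℤ)) = n + (b - a) := by omega
      rw [e1, e2] at hi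
      exact hi
    have step : ∀ t : ℕ, ∀ n : ℤ, a - (m : ℤ) ≤ n → n ≤ a + (t : ℤ) →
        x n = (fun j => x (j + (b - a))) n := by
      intro t
      induction t with
      | zero => intro n h1 h2; exact base n h1 (by omega)
      | succ t ih =>
        intro n h1 h2
        rcases le_or_gt n (a + (t : ℤ)) with h | h
        · exact ih n h1 h
        · have hn : n = a + (t : ℤ) + 1 := by omega
          subst hn
          exact det' x hx _ hyX (a + (t : ℤ))
            (fun n' h1' h2' => ih n' (by omega) h2')
    intro n hn
    rcases le_or_gt n a with h | h
    · exact base n hn h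
    · exact step (n - a).toNat n hn (by omega)
  -- pigeonhole: some window recurs arbitrarily far in the past
  have hrec : ∃ w : Fin (m + 1) → A, ∀ B : ℤ, ∃ k ≤ B,
      (fun i : Fin (m + 1) => x (k - (m : ℤ) + (i.1 : ℤ))) = w := by
    by_contra hw
    push_neg at hw
    choose B hB using hw
    have hne : Nonempty (Fin (m + 1) → A) := ⟨fun _ => x 0⟩
    obtain ⟨w0, _, hw0⟩ := Finset.exists_min_image Finset.univ B
      ⟨Classical.arbitrary _, Finset.mem_univ _⟩
    exact hB (fun i : Fin (m + 1) => x (B w0 - (m : ℤ) + (i.1 : ℤ))) (B w0)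
      (hw0 _ (Finset.mem_univ _)) rfl
  obtain ⟨w, hwrec⟩ := hrec
  obtain ⟨k1, hk1le, hk1⟩ := hwrec 0
  obtain ⟨k2, hk2le, hk2⟩ := hwrec (k1 - 1)
  have A2 : ∀ n : ℤ, k2 - (m : ℤ) ≤ n → x n = x (n + (k1 - k2)) :=
    agree k2 k1 (fun i => congrFun (hk2.trans hk1.symm) i)
  apply hxnp
  refine ⟨(k1 - k2).toNat, by omega, ?_⟩
  intro j
  have hpt : (((k1 - k2).toNat : ℕ) : ℤ) = k1 - k2 := by omega
  rw [hpt]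
  obtain ⟨k, hkle, hk⟩ := hwrec (min (j + (m : ℤ)) k2)
  have A1 : ∀ n : ℤ, k - (m : ℤ) ≤ n → x n = x (n + (k2 - k)) :=
    agree k k2 (fun i => congrFun (hk.trans hk2.symm) i)
  have e1 : x (j + (k1 - k2)) = x (j + (k1 - k2) + (k2 - k)) := A1 _ (by omega)
  have e2 : x (j + (k2 - k)) = x (j + (k2 - k) + (k1 - k2)) := A2 _ (by omega)
  have e3 : x j = x (j + (k2 - k)) := A1 j (by omega)
  rw [e1, show j + (k1 - k2) + (k2 - k) = j + (k2 - k) + (k1 - k2) from by ring,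
    ← e2, ← e3]
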